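/- For every positive integer n, the sum over Dyck paths π from (0,0) to (n,n) of q^{maj(σ(π))} equals the q-Catalan number (1/[n+1]_q)·qbinom(2n,n), where σ(π) is the 0/1 word of π (0 for north steps, 1 for east steps) and maj is the major index (sum of descent positions). -/

import Mathlib

open scoped Classical

noncomputable def qInt {K : Type*} [Field K] (q : K) (n : ℕ) : K :=
  ∑ i ∈ Finset.range n, q ^ i

noncomputable def qFact {K : Type*} [Field K] (q : K) (n : ℕ) : K :=
  ∏ i ∈ Finset.range n, qInt q (i + 1)

noncomputable def qBinom {K : Type*} [Field K] (q : K) (n k : ℕ) : K :=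
  qFact q n / (qFact q k * qFact q (n - k))

noncomputable def qCat {K : Type*} [Field K] (q : K) (n : ℕ) : K :=
  qBinom q (2 * n) n / qInt q (n + 1)

def majF (n : ℕ) (w : Fin n → Bool) : ℕ :=
  ∑ i ∈ Finset.range n,
    if h : i + 1 < n then
      (if w ⟨i, Nat.lt_of_succ_lt h⟩ = true ∧ w ⟨i + 1, h⟩ = false then i + 1 else 0)
    else 0

def IsDyckF (n : ℕ) (w : Fin (2 * n) → Bool) : Prop :=
  (Finset.univ.filter fun i => w i = true).card = n ∧
  ∀ k : ℕ, (Finset.univ.filter fun i : Fin (2 * n) => i.val < k ∧ w i = true).card ≤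
      (Finset.univ.filter fun i : Fin (2 * n) => i.val < k ∧ w i = false).card


open Finset

noncomputable abbrev qq : RatFunc ℚ := RatFunc.X

lemma X_sub_one_ne_zero : qq - 1 ≠ 0 := by
  have h : (Polynomial.X - 1 : Polynomial ℚ) ≠ 0 := by
    intro h
    have h2 := congrArg (Polynomial.eval 2) h
    simp at h2
    norm_num at h2
  have : qq - 1 = algebraMap (Polynomial ℚ) (RatFunc ℚ) (Polynomial.X - 1) := by
    simp [RatFunc.algebraMap_X]
  rw [this]
  exact RatFunc.algebraMap_ne_zero h

lemma qInt_eq (k : ℕ) : qInt qq k = (qq ^ k - 1) / (qq - 1) := by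
  rw [eq_div_iff X_sub_one_ne_zero, qInt, geom_sum_mul]

lemma qInt_ne_zero (k : ℕ) : qInt qq (k + 1) ≠ 0 := by
  rw [qInt_eq]
  intro h
  rw [div_eq_zero_iff] at h
  rcases h with h | h
  · have hx : (qq : RatFunc ℚ) ^ (k+1) = 1 := by linear_combination h
    have : (Polynomial.X : Polynomial ℚ) ^ (k+1) = 1 := by
      apply RatFunc.algebraMap_injective ℚ
      simpa [map_pow, RatFunc.algebraMap_X] using hx
    have := congrArg Polynomial.natDegree this
    simp [Polynomial.natDegree_X_pow] at this
  · exact X_sub_one_ne_zero h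

lemma qFact_ne_zero (k : ℕ) : qFact qq k ≠ 0 := by
  rw [qFact]
  exact Finset.prod_ne_zero_iff.2 fun i _ => qInt_ne_zero i

lemma qFact_succ (n : ℕ) : qFact qq (n + 1) = qFact qq n * qInt qq (n + 1) :=
  Finset.prod_range_succ _ _

lemma qInt_succ_eq (n : ℕ) : qInt qq (n + 1) = qq * qInt qq n + 1 := by
  have h := X_sub_one_ne_zero
  rw [qInt_eq, qInt_eq]
  field_simp
  ring

lemma algA1 (b : ℕ) :
    (qInt qq (b + 2) - qq * qInt qq b) * qInt qq (b + 1) = qInt qq (2 * (b + 1)) := by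
  have h := X_sub_one_ne_zero
  simp only [qInt_eq]
  field_simp
  ring

lemma algStar (a b : ℕ) :
    (qInt qq (a+1) - qq * qInt qq (b+1)) * qInt qq (a+b+1) * qInt qq (a+2)
      + (qInt qq (a+2) - qq * qInt qq b) * qInt qq (a+b+1) * qInt qq (b+1)
      + (qq ^ (a+b+1) - 1) * (qInt qq (a+1) - qq * qInt qq b) * qInt qq (a+2) * qInt qq (b+1)
      = (qInt qq (a+2) - qq * qInt qq (b+1)) * qInt qq (a+b+1) * qInt qq (a+b+2) := by
  have h := X_sub_one_ne_zero
  simp only [qInt_eq]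
  field_simp
  ring

def wBallot {m : ℕ} (w : Fin m → Bool) : Prop :=
  ∀ k : ℕ, (Finset.univ.filter fun i : Fin m => i.val < k ∧ w i = true).card ≤
      (Finset.univ.filter fun i : Fin m => i.val < k ∧ w i = false).card

def cnt {m : ℕ} (w : Fin m → Bool) (k : ℕ) (b : Bool) : ℕ :=
  (Finset.univ.filter fun i : Fin m => i.val < k ∧ w i = b).card

def wOnes {m : ℕ} (w : Fin m → Bool) : ℕ := (Finset.univ.filter fun i => w i = true).card

lemma wBallot_iff {m : ℕ} (w : Fin m → Bool) : wBallot w ↔ ∀ k, cnt w k true ≤ cnt w k false :=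
  Iff.rfl

def extF {m : ℕ} (w : Fin m → Bool) (i : ℕ) : Bool := if h : i < m then w ⟨i, h⟩ else false

lemma cnt_snoc {m : ℕ} (v : Fin m → Bool) (x : Bool) (k : ℕ) (b : Bool) :
    cnt (Fin.snoc v x) k b = cnt v k b + if m < k ∧ x = b then 1 else 0 := by
  unfold cnt
  rw [Finset.card_filter, Finset.card_filter, Fin.sum_univ_castSucc]
  simp [Fin.snoc_castSucc, Fin.snoc_last, Fin.val_last]

lemma cnt_stable {m : ℕ} (w : Fin m → Bool) {k : ℕ} (h : m ≤ k) (b : Bool) :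
    cnt w k b = cnt w m b := by
  unfold cnt
  congr 1
  apply Finset.filter_congr
  intro i _
  simp [i.isLt, lt_of_lt_of_le i.isLt h]

lemma cnt_true_eq {m : ℕ} (w : Fin m → Bool) : cnt w m true = wOnes w := by
  unfold cnt wOnes
  congr 1
  apply Finset.filter_congr
  intro i _
  simp [i.isLt]

lemma cnt_add_cnt {m : ℕ} (w : Fin m → Bool) : cnt w m true + cnt w m false = m := by
  unfold cnt
  have h1 := Finset.card_filter_add_card_filter_not
    (s := (Finset.univ : Finset (Fin m))) (p := fun i => i.val < m ∧ w i = true)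
  simp only [Finset.card_univ, Fintype.card_fin] at h1
  have h2 : (Finset.univ.filter fun a : Fin m => ¬(a.val < m ∧ w a = true)) =
      Finset.univ.filter fun i : Fin m => i.val < m ∧ w i = false := by
    apply Finset.filter_congr
    intro i _
    simp [i.isLt]
  rw [h2] at h1
  exact h1

lemma wOnes_snoc {m : ℕ} (v : Fin m → Bool) (x : Bool) :
    wOnes (Fin.snoc v x) = wOnes v + if x = true then 1 else 0 := by
  unfold wOnes
  rw [Finset.card_filter, Finset.card_filter, Fin.sum_univ_castSucc]
  simp [Fin.snoc_castSucc, Fin.snoc_last]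

lemma wBallot_snoc {m : ℕ} (v : Fin m → Bool) (x : Bool) :
    wBallot (Fin.snoc v x) ↔
      wBallot v ∧ cnt (Fin.snoc v x) (m+1) true ≤ cnt (Fin.snoc v x) (m+1) false := by
  simp only [wBallot_iff]
  constructor
  · intro h
    refine ⟨fun k => ?_, h (m+1)⟩
    rcases le_or_gt k m with hk | hk
    · have := h k
      rwa [cnt_snoc, cnt_snoc, if_neg (by omega), if_neg (by omega),
        Nat.add_zero, Nat.add_zero] at this
    · rw [cnt_stable v hk.le, cnt_stable v hk.le]
      have := h m
      rwa [cnt_snoc, cnt_snoc, if_neg (by omega), if_neg (by omega),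
        Nat.add_zero, Nat.add_zero] at this
  · rintro ⟨hv, hfull⟩ k
    rcases le_or_gt k m with hk | hk
    · rw [cnt_snoc, cnt_snoc, if_neg (by omega), if_neg (by omega)]
      simpa using hv k
    · rw [cnt_stable _ (by omega : m + 1 ≤ k), cnt_stable _ (by omega : m + 1 ≤ k)]
      exact hfull

lemma majF_eq (m : ℕ) (w : Fin m → Bool) :
    majF m w = ∑ i ∈ Finset.range m,
      if i + 1 < m ∧ extF w i = true ∧ extF w (i+1) = false then i + 1 else 0 := by
  unfold majF
  apply Finset.sum_congr rfl
  intro i hi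
  rw [Finset.mem_range] at hi
  by_cases h : i + 1 < m
  · rw [dif_pos h]
    simp [extF, h, Nat.lt_of_succ_lt h]
  · rw [dif_neg h, if_neg (by tauto)]

lemma extF_snoc {m : ℕ} (v : Fin m → Bool) (x : Bool) (i : ℕ) :
    extF (Fin.snoc v x) i = if h : i < m then v ⟨i, h⟩ else if i = m then x else false := by
  by_cases h : i < m
  · rw [dif_pos h, extF, dif_pos (by omega : i < m + 1)]
    have : (⟨i, by omega⟩ : Fin (m+1)) = Fin.castSucc ⟨i, h⟩ := rfl
    rw [this, Fin.snoc_castSucc]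
  · rw [dif_neg h]
    by_cases h2 : i = m
    · subst h2
      rw [if_pos rfl, extF, dif_pos (by omega : i < i + 1)]
      have : (⟨i, by omega⟩ : Fin (i+1)) = Fin.last i := rfl
      rw [this, Fin.snoc_last]
    · rw [if_neg h2, extF, dif_neg (by omega)]

lemma extF_last {m : ℕ} (v : Fin (m+1) → Bool) : extF v m = v (Fin.last m) := by
  rw [extF, dif_pos (by omega : m < m + 1)]
  rfl

lemma majF_snoc_zero (v : Fin 0 → Bool) (x : Bool) : majF 1 (Fin.snoc v x) = 0 := by
  simp [majF]

lemma majF_snoc {m : ℕ} (v : Fin (m+1) → Bool) (x : Bool) :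
    majF (m+2) (Fin.snoc v x) =
      majF (m+1) v + (if v (Fin.last m) = true ∧ x = false then m + 1 else 0) := by
  rw [majF_eq, majF_eq, Finset.sum_range_succ (n := m+1), Finset.sum_range_succ (n := m),
    Finset.sum_range_succ (n := m)]
  have e1 : ∀ i : ℕ, i < m + 1 → extF (Fin.snoc v x) i = extF v i := by
    intro i hi
    rw [extF_snoc, dif_pos hi, extF, dif_pos hi]
  have hsum : ∀ i ∈ Finset.range m,
      (if i + 1 < m + 2 ∧ extF (Fin.snoc v x) i = true ∧ extF (Fin.snoc v x) (i+1) = false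
        then i + 1 else 0)
      = (if i + 1 < m + 1 ∧ extF v i = true ∧ extF v (i+1) = false then i + 1 else 0) := by
    intro i hi
    rw [Finset.mem_range] at hi
    rw [e1 i (by omega), e1 (i+1) (by omega)]
    have h1 : i + 1 < m + 2 := by omega
    have h2 : i + 1 < m + 1 := by omega
    simp [h1, h2]
  rw [Finset.sum_congr rfl hsum]
  have t2 : (if m+1+1 < m+2 ∧ extF (Fin.snoc v x) (m+1) = true ∧
      extF (Fin.snoc v x) (m+1+1) = false then m+1+1 else 0) = 0 := by
    apply if_neg
    rintro ⟨h, -⟩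
    omega
  have t3 : (if m+1 < m+1 ∧ extF v m = true ∧ extF v (m+1) = false then m+1 else 0) = 0 := by
    apply if_neg
    rintro ⟨h, -⟩
    omega
  have t4 : (if m+1 < m+2 ∧ extF (Fin.snoc v x) m = true ∧ extF (Fin.snoc v x) (m+1) = false
      then m+1 else 0) = (if v (Fin.last m) = true ∧ x = false then m+1 else 0) := by
    rw [e1 m (by omega), extF_last]
    have hx : extF (Fin.snoc v x) (m+1) = x := by
      rw [extF_snoc, dif_neg (by omega), if_pos rfl]
    rw [hx]
    simp [show m+1 < m+2 from by omega]
  rw [t2, t3, t4]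
  ring


noncomputable def Bsum (m b : ℕ) : RatFunc ℚ :=
  ∑ w ∈ Finset.univ.filter (fun w : Fin m → Bool => wBallot w ∧ wOnes w = b), qq ^ majF m w

noncomputable def BsumE (m b : ℕ) (e : Bool) : RatFunc ℚ :=
  ∑ w ∈ Finset.univ.filter
    (fun w : Fin (m+1) → Bool => (wBallot w ∧ wOnes w = b) ∧ w (Fin.last m) = e),
    qq ^ majF (m+1) w

lemma sum_snoc {M : Type*} [AddCommMonoid M] (m : ℕ) (g : (Fin (m+1) → Bool) → M) :
    ∑ w : Fin (m+1) → Bool, g w = ∑ x : Bool, ∑ v : Fin m → Bool, g (Fin.snoc v x) := by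
  rw [← Equiv.sum_comp (Fin.snocEquiv (fun _ => Bool)) g, Fintype.sum_prod_type]
  rfl

lemma Bsum_split (m b : ℕ) : Bsum (m+1) b = BsumE m b false + BsumE m b true := by
  unfold Bsum BsumE
  rw [Finset.sum_filter, Finset.sum_filter, Finset.sum_filter, ← Finset.sum_add_distrib]
  apply Finset.sum_congr rfl
  intro w _
  by_cases h : w (Fin.last m) = true
  · simp [h]
  · simp [h]

lemma majF_zero' (v : Fin 0 → Bool) : majF 0 v = 0 := by simp [majF]

lemma majF_snoc_true {m : ℕ} (v : Fin m → Bool) : majF (m+1) (Fin.snoc v true) = majF m v := by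
  cases m with
  | zero => rw [majF_snoc_zero, majF_zero']
  | succ m' => rw [majF_snoc, if_neg (by simp), Nat.add_zero]

lemma Ezero {m b : ℕ} (e : Bool) (h : m + 1 < 2 * b) : BsumE m b e = 0 := by
  unfold BsumE
  rw [Finset.filter_false_of_mem, Finset.sum_empty]
  rintro w - ⟨⟨hb, ho⟩, -⟩
  have h1 := hb (m+1)
  rw [wBallot_iff] at hb
  have h2 := hb (m+1)
  rw [cnt_true_eq w] at h2
  have h3 := cnt_add_cnt w
  rw [cnt_true_eq w] at h3
  omega

lemma Btrue {m b : ℕ} (hb : 1 ≤ b) (h : 2 * b ≤ m + 1) :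
    BsumE m b true = Bsum m (b - 1) := by
  unfold BsumE Bsum
  rw [Finset.sum_filter, Finset.sum_filter, sum_snoc, Fintype.sum_bool]
  have hfalse : ∀ v : Fin m → Bool,
      (if ((wBallot (Fin.snoc v false) ∧ wOnes (Fin.snoc v false) = b) ∧
        (Fin.snoc v false : Fin (m+1) → Bool) (Fin.last m) = true) then qq ^ majF (m+1) (Fin.snoc v false) else 0)
      = 0 := by
    intro v
    rw [if_neg]
    rintro ⟨-, hlast⟩
    rw [Fin.snoc_last] at hlast
    exact Bool.false_ne_true hlast
  rw [Finset.sum_congr rfl (fun v _ => hfalse v), Finset.sum_const_zero, add_zero]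
  apply Finset.sum_congr rfl
  intro v _
  have hones : wOnes (Fin.snoc v true) = wOnes v + 1 := by
    rw [wOnes_snoc, if_pos rfl]
  by_cases hv : wBallot v ∧ wOnes v = b - 1
  · rw [if_pos hv, if_pos, majF_snoc_true]
    refine ⟨⟨?_, by omega⟩, Fin.snoc_last _ _⟩
    rw [wBallot_snoc]
    refine ⟨hv.1, ?_⟩
    have h1 : cnt (Fin.snoc v true) (m+1) true = b := by
      rw [cnt_true_eq, hones]; omega
    have h2 := cnt_add_cnt (Fin.snoc v true)
    omega
  · rw [if_neg, if_neg hv]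
    rintro ⟨⟨hball, ho⟩, -⟩
    rw [wBallot_snoc] at hball
    exact hv ⟨hball.1, by omega⟩

lemma Bszero {m b : ℕ} (h : m < 2 * b) : Bsum m b = 0 := by
  unfold Bsum
  rw [Finset.filter_false_of_mem, Finset.sum_empty]
  rintro w - ⟨hb, ho⟩
  rw [wBallot_iff] at hb
  have h2 := hb m
  rw [cnt_true_eq w] at h2
  have h3 := cnt_add_cnt w
  rw [cnt_true_eq w] at h3
  omega

lemma Bone (m : ℕ) : Bsum m 0 = 1 := by
  unfold Bsum
  have hset : (Finset.univ.filter (fun w : Fin m → Bool => wBallot w ∧ wOnes w = 0)) =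
      {fun _ => false} := by
    ext w
    simp only [Finset.mem_filter, Finset.mem_univ, true_and, Finset.mem_singleton]
    constructor
    · rintro ⟨-, ho⟩
      funext i
      by_contra hi
      rw [Bool.not_eq_false] at hi
      have : i ∈ Finset.univ.filter (fun i => w i = true) := by simp [hi]
      rw [wOnes, Finset.card_eq_zero] at ho
      rw [ho] at this
      exact absurd this (Finset.notMem_empty i)
    · rintro rfl
      constructor
      · intro k
        have : (Finset.univ.filter fun i : Fin m => i.val < k ∧ (fun _ => false) i = true) = ∅ := by
          apply Finset.filter_false_of_mem
          rintro i - ⟨-, hi⟩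
          exact Bool.false_ne_true hi
        rw [this, Finset.card_empty]
        omega
      · rw [wOnes, Finset.card_eq_zero]
        apply Finset.filter_false_of_mem
        rintro i - hi
        exact Bool.false_ne_true hi
  rw [hset, Finset.sum_singleton]
  have : majF m (fun _ => false) = 0 := by
    rw [majF_eq]
    apply Finset.sum_eq_zero
    intro i _
    rw [if_neg]
    rintro ⟨-, hi, -⟩
    rw [extF] at hi
    split at hi
    · exact Bool.false_ne_true hi
    · exact Bool.false_ne_true hi
  rw [this, pow_zero]


lemma Cfalse {m b : ℕ} (h : 2 * b ≤ m + 2) :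
    BsumE (m+1) b false = BsumE m b false + qq^(m+1) * BsumE m b true := by
  unfold BsumE
  rw [Finset.sum_filter, Finset.sum_filter, Finset.sum_filter, sum_snoc, Fintype.sum_bool]
  have htrue : ∀ v : Fin (m+1) → Bool,
      (if ((wBallot (Fin.snoc v true) ∧ wOnes (Fin.snoc v true) = b) ∧
        (Fin.snoc v true : Fin (m+2) → Bool) (Fin.last (m+1)) = false)
        then qq ^ majF (m+2) (Fin.snoc v true) else 0) = 0 := by
    intro v
    rw [if_neg]
    rintro ⟨-, hlast⟩
    rw [Fin.snoc_last] at hlast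
    exact absurd hlast (by simp)
  rw [Finset.sum_congr rfl (fun v _ => htrue v), Finset.sum_const_zero, zero_add,
    Finset.mul_sum, ← Finset.sum_add_distrib]
  apply Finset.sum_congr rfl
  intro v _
  have hones : wOnes (Fin.snoc v false) = wOnes v := by
    rw [wOnes_snoc, if_neg (by simp), Nat.add_zero]
  by_cases hv : wBallot v ∧ wOnes v = b
  · have hball : wBallot (Fin.snoc v false) := by
      rw [wBallot_snoc]
      refine ⟨hv.1, ?_⟩
      have h1 : cnt (Fin.snoc v false) (m+1+1) true = b := by
        rw [cnt_true_eq, hones, hv.2]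
      have h2 : cnt (Fin.snoc v false) (m+1+1) true + cnt (Fin.snoc v false) (m+1+1) false
          = m+1+1 := cnt_add_cnt (Fin.snoc v false)
      omega
    rw [if_pos ⟨⟨hball, by rw [hones, hv.2]⟩, Fin.snoc_last _ _⟩, majF_snoc]
    by_cases hl : v (Fin.last m) = true
    · rw [if_pos ⟨hl, rfl⟩, if_neg (fun hc => by rw [hc.2] at hl; exact Bool.false_ne_true hl),
        if_pos ⟨hv, hl⟩, pow_add]
      ring
    · rw [if_neg (fun hc => hl hc.1), if_pos ⟨hv, by simpa using hl⟩,
        if_neg (fun hc => hl hc.2), Nat.add_zero]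
      ring
  · rw [if_neg, if_neg (fun hc => hv hc.1), if_neg (fun hc => hv hc.1)]
    · ring
    · rintro ⟨⟨hball, ho⟩, -⟩
      rw [wBallot_snoc] at hball
      rw [hones] at ho
      exact hv ⟨hball.1, ho⟩

lemma Bsum_rec {m b : ℕ} (hb : 1 ≤ b) (h : 2 * b ≤ m) :
    Bsum (m+1) b = Bsum m b + Bsum m (b-1) + (qq^m - 1) * Bsum (m-1) (b-1) := by
  obtain ⟨m', rfl⟩ : ∃ m', m = m' + 1 := ⟨m - 1, by omega⟩
  rw [Bsum_split, Btrue hb (by omega), Cfalse (by omega)]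
  have h1 : Bsum (m'+1) b = BsumE m' b false + BsumE m' b true := Bsum_split m' b
  have h2 : BsumE m' b true = Bsum m' (b-1) := Btrue hb (by omega)
  rw [h2] at h1
  rw [h2]
  have h3 : m' + 1 - 1 = m' := by omega
  rw [h3]
  linear_combination -h1

lemma Bsum_diag {b : ℕ} (hb : 1 ≤ b) : Bsum (2*b) b = Bsum (2*b - 1) (b - 1) := by
  obtain ⟨m', hm⟩ : ∃ m', 2*b = m' + 1 + 1 := ⟨2*b - 2, by omega⟩
  have hm1 : 2*b - 1 = m' + 1 := by omega
  rw [hm1, hm, Bsum_split, Btrue hb (by omega), Cfalse (by omega),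
    Ezero false (by omega), Ezero true (by omega)]
  ring

lemma qFact_eq_mul {n k : ℕ} (h : n = k + 1) : qFact qq n = qFact qq k * qInt qq n := by
  subst h
  exact qFact_succ k

lemma qInt_zero : qInt qq 0 = 0 := by simp [qInt]

lemma qFact_zero : qFact qq 0 = 1 := by simp [qFact]

lemma keyProd : ∀ m b : ℕ, 2 * b ≤ m →
    Bsum m b * (qFact qq (m - b + 1) * qFact qq b) =
      (qInt qq (m - b + 1) - qq * qInt qq b) * qFact qq m := by
  intro m
  induction m using Nat.strong_induction_on with
  | _ m IH =>
    intro b hb2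
    rcases Nat.eq_zero_or_pos b with rfl | hb
    · rw [Bone, Nat.sub_zero, qInt_zero, qFact_zero, mul_zero, sub_zero]
      rw [qFact_succ]
      ring
    · obtain ⟨m0, rfl⟩ : ∃ m0, m = m0 + 1 := ⟨m - 1, by omega⟩
      rcases eq_or_lt_of_le hb2 with heq | hlt
      · -- diagonal case : 2*b = m0 + 1
        obtain ⟨c, rfl⟩ : ∃ c, b = c + 1 := ⟨b - 1, by omega⟩
        obtain rfl : m0 = 2*c + 1 := by omega
        have hd : Bsum (2*c + 1 + 1) (c+1) = Bsum (2*c+1) c := by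
          have := Bsum_diag (b := c + 1) (by omega)
          rw [show 2 * (c+1) = 2*c+1+1 from by omega] at this
          rw [show 2*c+1+1-1 = 2*c+1 from by omega,
            show c+1-1 = c from by omega] at this
          exact this
        rw [hd]
        have hI := IH (2*c+1) (by omega) c (by omega)
        have e4 : 2*c+1 - c + 1 = c + 2 := by omega
        have e5 : 2*c+1+1 - (c+1) + 1 = c + 2 := by omega
        rw [e4] at hI
        rw [e5]
        have hF1 : qFact qq (c+1) = qFact qq c * qInt qq (c+1) := qFact_succ c
        have hF2 : qFact qq (2*c+1+1) = qFact qq (2*c+1) * qInt qq (2*c+1+1) := qFact_succ _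
        have hA := algA1 c
        have e6 : 2 * (c+1) = 2*c+1+1 := by omega
        rw [e6] at hA
        have hS : qInt qq (c+2) = qq * qInt qq (c+1) + 1 := qInt_succ_eq (c+1)
        rw [hF1, hF2]
        linear_combination (qInt qq (c+1)) * hI + qFact qq (2*c+1) * hA
          - qInt qq (2*c+1+1) * qFact qq (2*c+1) * hS
      · -- main case : 2*b ≤ m0
        obtain ⟨c, rfl⟩ : ∃ c, b = c + 1 := ⟨b - 1, by omega⟩
        obtain ⟨a, rfl⟩ : ∃ a, m0 = a + c + 1 := ⟨m0 - c - 1, by omega⟩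
        have hac : c + 1 ≤ a := by omega
        have hrec := Bsum_rec (m := a + c + 1) (b := c + 1) (by omega) (by omega)
        have e0 : c + 1 - 1 = c := by omega
        have e1 : a + c + 1 - 1 = a + c := by omega
        rw [e0, e1] at hrec
        rw [hrec]
        have hI1 := IH (a+c+1) (by omega) (c+1) (by omega)
        have hI2 := IH (a+c+1) (by omega) c (by omega)
        have hI3 := IH (a+c) (by omega) c (by omega)
        have f1 : a + c + 1 - (c+1) + 1 = a + 1 := by omega
        have f2 : a + c + 1 - c + 1 = a + 2 := by omega
        have f3 : a + c - c + 1 = a + 1 := by omega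
        have f4 : a + c + 1 + 1 - (c + 1) + 1 = a + 2 := by omega
        rw [f1] at hI1
        rw [f2] at hI2
        rw [f3] at hI3
        rw [f4]
        have hFa2 : qFact qq (a+2) = qFact qq (a+1) * qInt qq (a+2) :=
          qFact_eq_mul (by omega)
        have hFc1 : qFact qq (c+1) = qFact qq c * qInt qq (c+1) := qFact_succ c
        have hFm1 : qFact qq (a+c+1) = qFact qq (a+c) * qInt qq (a+c+1) :=
          qFact_eq_mul (by omega)
        have hFm2 : qFact qq (a+c+1+1) = qFact qq (a+c) * qInt qq (a+c+1) * qInt qq (a+c+1+1) := by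
          rw [qFact_succ (a+c+1), hFm1]
        have hstar := algStar a c
        have g1 : a + c + 2 = a + c + 1 + 1 := by omega
        rw [g1] at hstar
        rw [hFm1] at hI1 hI2
        rw [hFc1] at hI1 ⊢
        rw [hFa2] at hI2 ⊢
        rw [hFm2]
        linear_combination (qInt qq (a+2)) * hI1 + (qInt qq (c+1)) * hI2
          + ((qq^(a+c+1) - 1) * qInt qq (a+2) * qInt qq (c+1)) * hI3
          + (qFact qq (a+c)) * hstar

theorem maj_gen_fun_dyck (n : ℕ) (hn : 1 ≤ n) :
    ∑ w ∈ Finset.univ.filter (IsDyckF n), (RatFunc.X : RatFunc ℚ) ^ majF (2 * n) w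
      = qCat (RatFunc.X : RatFunc ℚ) n := by
  have hqq : (RatFunc.X : RatFunc ℚ) = qq := rfl
  rw [hqq]
  have hset : Finset.univ.filter (IsDyckF n) =
      Finset.univ.filter (fun w : Fin (2*n) → Bool => wBallot w ∧ wOnes w = n) := by
    ext w
    simp only [Finset.mem_filter, Finset.mem_univ, true_and]
    constructor
    · rintro ⟨h1, h2⟩
      exact ⟨h2, h1⟩
    · rintro ⟨h1, h2⟩
      exact ⟨h2, h1⟩
  rw [hset]
  have hL : ∑ w ∈ Finset.univ.filter
      (fun w : Fin (2*n) → Bool => wBallot w ∧ wOnes w = n), qq ^ majF (2*n) w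
      = Bsum (2*n) n := rfl
  rw [hL]
  have hK := keyProd (2*n) n (by omega)
  rw [show 2*n - n + 1 = n + 1 from by omega] at hK
  rw [qFact_succ n] at hK
  have hS : qInt qq (n+1) = qq * qInt qq n + 1 := qInt_succ_eq n
  rw [qCat, qBinom, show 2*n - n = n from by omega, div_div,
    eq_div_iff (mul_ne_zero (mul_ne_zero (qFact_ne_zero n) (qFact_ne_zero n))
      (qInt_ne_zero n))]
  linear_combination hK + qFact qq (2*n) * hS
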